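/- Let κ be an uncountable cardinal carrying a normal κ-complete nonprincipal ultrafilter U, let A ⊆ ℕ^ℕ, and let t ↦ <_t be an order representation of A. Consider the auxiliary game in which player I, at his i-th move, plays a pair (n_{2i}, ξ_i) ∈ ℕ × κ, player II plays n_{2i+1} ∈ ℕ, and player I wins the resulting play iff x := (n_k)_k ∈ A and for every k and all i, j < k/2: i <_{x↾k} j if and only if ξ_i < ξ_j. If player II has a winning strategy in this auxiliary game, then player II has a winning strategy in the Gale–Stewart game on ℕ with payoff A. -/

import Mathlib

universe u

/-- The finite sequence of the first `n` terms of `x`, i.e. `x ↾ n`. -/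
def hist {X : Type*} (x : ℕ → X) (n : ℕ) : List X := List.ofFn (fun i : Fin n => x i)

/-- A play `x` is consistent with a strategy `τ` for player II in the Gale–Stewart game
on ℕ if `x (2k+1) = τ (x ↾ (2k+1))` for all `k`. -/
def ConsistentII (τ : List ℕ → ℕ) (x : ℕ → ℕ) : Prop :=
  ∀ k, x (2 * k + 1) = τ (hist x (2 * k + 1))

/-- A strategy `τ` is winning for player II in the Gale–Stewart game on ℕ with payoff
`A` if every play consistent with it lies outside `A`. -/
def WinningII (A : Set (ℕ → ℕ)) (τ : List ℕ → ℕ) : Prop :=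
  ∀ x : ℕ → ℕ, ConsistentII τ x → x ∉ A

/-- `R` is an order representation of `A ⊆ ℕ^ℕ`: to each finite sequence `t` of naturals
it assigns a strict linear order `R t` on `{0, 1, …, |t|}`, monotone under initial
segments, such that `x ∈ A` iff the union order `<_x := ⋃ₙ R (x ↾ n)` is wellfounded
(has no infinite strictly descending sequence). -/
structure OrderRep (A : Set (ℕ → ℕ)) (R : List ℕ → ℕ → ℕ → Prop) : Prop where
  dom : ∀ t : List ℕ, ∀ i j, R t i j → i ≤ t.length ∧ j ≤ t.length
  irrefl : ∀ t : List ℕ, ∀ i, ¬ R t i i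
  trans : ∀ t : List ℕ, ∀ i j k, R t i j → R t j k → R t i k
  total : ∀ t : List ℕ, ∀ i j, i ≤ t.length → j ≤ t.length → i ≠ j → R t i j ∨ R t j i
  mono : ∀ t s : List ℕ, t <+: s → ∀ i j, R t i j → R s i j
  mem_iff : ∀ x : ℕ → ℕ,
    (x ∈ A ↔ ¬ ∃ f : ℕ → ℕ, ∀ n : ℕ, ∃ m : ℕ, R (hist x m) (f (n + 1)) (f n))

/-- Player I wins the play `(x, ξ)` of the auxiliary game iff `x ∈ A` and for every `k`
and all `i, j < k / 2`: `i <_{x ↾ k} j` iff `ξ_i < ξ_j`. -/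
def AuxPayoff (A : Set (ℕ → ℕ)) (R : List ℕ → ℕ → ℕ → Prop) {O : Type*} [LT O]
    (x : ℕ → ℕ) (ξ : ℕ → O) : Prop :=
  x ∈ A ∧ ∀ k i j, i < k / 2 → j < k / 2 → (R (hist x k) i j ↔ ξ i < ξ j)

/-- A strategy for player II in the auxiliary game assigns to each position (the
sequences of natural-number moves and ordinal moves made so far) a natural number
`n_{2i+1}`; it is winning if no play consistent with it satisfies the auxiliary
payoff. -/
def AuxWinningII (A : Set (ℕ → ℕ)) (R : List ℕ → ℕ → ℕ → Prop) {O : Type*} [LT O]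
    (τ : List ℕ × List O → ℕ) : Prop :=
  ∀ (x : ℕ → ℕ) (ξ : ℕ → O),
    (∀ i, x (2 * i + 1) = τ (hist x (2 * i + 1), hist ξ (i + 1))) → ¬ AuxPayoff A R x ξ

/-- An ultrafilter `U` on `κ` is `κ`-complete if it is closed under intersections of
families of fewer than `κ` of its members. -/
def KappaComplete {O : Type u} (U : Ultrafilter O) : Prop :=
  ∀ S : Set (Set O), Cardinal.mk S < Cardinal.mk O → (∀ t ∈ S, t ∈ U) → ⋂₀ S ∈ U

/-- An ultrafilter is nonprincipal if it contains no singleton. -/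
def Nonprincipal {O : Type u} (U : Ultrafilter O) : Prop :=
  ∀ a : O, {a} ∉ U

/-- An ultrafilter `U` on a well-ordered set `κ` is normal if it is closed under
diagonal intersections. -/
def NormalUF {O : Type u} [LT O] (U : Ultrafilter O) : Prop :=
  ∀ f : O → Set O, (∀ a, f a ∈ U) → {a : O | ∀ b, b < a → a ∈ f b} ∈ U


section UF
variable {O : Type u} (U : Ultrafilter O)

/-- Sets of cardinality `< mk O` have complements in a complete nonprincipal UF. -/
lemma compl_mem_of_small (hnp : Nonprincipal U) (hc : KappaComplete U)
    (S : Set O) (hS : Cardinal.mk S < Cardinal.mk O) : Sᶜ ∈ U := by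
  have h1 : ((fun a => ({a}ᶜ : Set O)) '' S) ∈ {T : Set (Set O) | True} := trivial
  have hcard : Cardinal.mk ((fun a => ({a}ᶜ : Set O)) '' S) < Cardinal.mk O :=
    lt_of_le_of_lt Cardinal.mk_image_le hS
  have hmem : ∀ t ∈ (fun a => ({a}ᶜ : Set O)) '' S, t ∈ U := by
    rintro t ⟨a, _, rfl⟩
    exact Ultrafilter.compl_mem_iff_notMem.2 (hnp a)
  have := hc _ hcard hmem
  have heq : ⋂₀ ((fun a => ({a}ᶜ : Set O)) '' S) = Sᶜ := by
    ext b
    simp only [Set.sInter_image, Set.mem_iInter, Set.mem_compl_iff, Set.mem_singleton_iff]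
    constructor
    · intro h hb; exact h b hb rfl
    · rintro h a ha rfl; exact h ha
  rwa [heq] at this

lemma not_mem_of_small (hnp : Nonprincipal U) (hc : KappaComplete U)
    (S : Set O) (hS : Cardinal.mk S < Cardinal.mk O) : S ∉ U := by
  intro h
  have h2 := compl_mem_of_small U hnp hc S hS
  have : (∅ : Set O) ∈ U := by
    have := (U : Filter O).inter_sets h h2
    simpa using this
  simpa using this

variable [Uncountable O]

lemma aleph0_lt_of_mem (hnp : Nonprincipal U) (hc : KappaComplete U)
    {H : Set O} (hH : H ∈ U) : Cardinal.aleph0 < Cardinal.mk H := by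
  by_contra h
  push_neg at h
  exact not_mem_of_small U hnp hc H (lt_of_le_of_lt h (Cardinal.aleph0_lt_mk (α := O))) hH

lemma infinite_of_mem (hnp : Nonprincipal U) (hc : KappaComplete U)
    {H : Set O} (hH : H ∈ U) : H.Infinite := by
  rw [← Set.infinite_coe_iff, Cardinal.infinite_iff]
  exact le_of_lt (aleph0_lt_of_mem U hnp hc hH)

lemma iInter_mem_ctble {ι : Type} [Countable ι] (hc : KappaComplete U)
    (f : ι → Set O) (h : ∀ i, f i ∈ U) : (⋂ i, f i) ∈ U := by
  haveI := (Set.countable_range f).to_subtype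
  have hcard : Cardinal.mk (Set.range f) < Cardinal.mk O :=
    lt_of_le_of_lt Cardinal.mk_le_aleph0 (Cardinal.aleph0_lt_mk (α := O))
  have := hc _ hcard (by rintro t ⟨i, rfl⟩; exact h i)
  rwa [Set.sInter_range] at this

/-- A countable partition has a piece in the ultrafilter. -/
lemma exists_fiber_mem (hc : KappaComplete U) (c : O → ℕ) :
    ∃ m, {a | c a = m} ∈ U := by
  by_contra h
  push_neg at h
  have h2 : ∀ m : ℕ, {a | c a ≠ m} ∈ U := fun m =>
    Ultrafilter.compl_mem_iff_notMem.2 (by intro hin; exact h m hin)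
  have h3 := iInter_mem_ctble U hc _ h2
  have : (∅ : Set O) ∈ U := by
    convert h3 using 1
    ext a
    simp
  simpa using this

end UF

section Rowbottom
variable {O : Type u} [LinearOrder O]

/-- `l` is a strictly increasing list with entries from `H`. -/
def IncrFrom (H : Set O) (l : List O) : Prop :=
  l.Chain' (· < ·) ∧ ∀ a ∈ l, a ∈ H

/-- `H` is homogeneous for the partition `F` of increasing `n`-tuples. -/
def Homog (F : List O → ℕ) (n : ℕ) (H : Set O) : Prop :=
  ∀ l l', l.length = n → l'.length = n → IncrFrom H l → IncrFrom H l' → F l = F l'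

lemma Homog.mono {F : List O → ℕ} {n : ℕ} {H H' : Set O} (hsub : H' ⊆ H)
    (h : Homog F n H) : Homog F n H' :=
  fun l l' h1 h2 h3 h4 =>
    h l l' h1 h2 ⟨h3.1, fun a ha => hsub (h3.2 a ha)⟩ ⟨h4.1, fun a ha => hsub (h4.2 a ha)⟩

lemma exists_incrFrom {H : Set O} (hH : H.Infinite) (n : ℕ) :
    ∃ l : List O, l.length = n ∧ IncrFrom H l := by
  obtain ⟨s, hsub, hcard⟩ := hH.exists_subset_card_eq n
  refine ⟨s.sort (· ≤ ·), by simp [hcard], ?_, ?_⟩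
  · have := (Finset.sortedLT_sort s).pairwise
    exact List.isChain_iff_pairwise.2 this
  · intro a ha
    exact hsub (by simpa [Finset.mem_sort] using ha)

variable (U : Ultrafilter O) [Uncountable O]

lemma rowbottom (hnp : Nonprincipal U) (hc : KappaComplete U) (hnorm : NormalUF U)
    (n : ℕ) (F : List O → ℕ) : ∃ H ∈ U, Homog F n H := by
  induction n generalizing F with
  | zero =>
    refine ⟨Set.univ, Filter.univ_mem, fun l l' h1 h2 _ _ => ?_⟩
    rw [List.length_eq_zero_iff.1 h1, List.length_eq_zero_iff.1 h2]
  | succ n ih =>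
    -- for each `a`, a homogeneous set for `F (a :: ·)`
    have h1 : ∀ a : O, ∃ H ∈ U, Homog (fun l => F (a :: l)) n H := fun a => ih _
    choose Ha hHa hhomm using h1
    -- the value attained on `Ha a`
    have hval : ∀ a : O, ∃ m : ℕ, ∀ l : List O, l.length = n → IncrFrom (Ha a) l →
        F (a :: l) = m := by
      intro a
      obtain ⟨l0, hl0, hl0'⟩ := exists_incrFrom (infinite_of_mem U hnp hc (hHa a)) n
      exact ⟨F (a :: l0), fun l hl hl' => hhomm a l l0 hl hl0 hl' hl0'⟩
    choose c hch using hval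
    obtain ⟨m, hm⟩ := exists_fiber_mem U hc c
    have hdiag := hnorm Ha hHa
    refine ⟨{a | ∀ b, b < a → a ∈ Ha b} ∩ {a | c a = m}, Filter.inter_mem hdiag hm, ?_⟩
    -- homogeneity
    have key : ∀ l : List O, l.length = n + 1 →
        IncrFrom ({a | ∀ b, b < a → a ∈ Ha b} ∩ {a | c a = m}) l → F l = m := by
      rintro l hl ⟨hch', hmem⟩
      obtain ⟨a, l', rfl⟩ : ∃ a l', l = a :: l' := by
        cases l with
        | nil => simp at hl
        | cons a l' => exact ⟨a, l', rfl⟩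
      have hl' : l'.length = n := by simpa using hl
      have hrel : ∀ b ∈ l', a < b := by
        have hp := List.isChain_iff_pairwise.1 hch'
        exact (List.pairwise_cons.1 hp).1
      have hincr : IncrFrom (Ha a) l' := by
        refine ⟨(List.isChain_cons.1 hch').2, fun b hb => ?_⟩
        have hbmem := hmem b (List.mem_cons_of_mem _ hb)
        exact hbmem.1 a (hrel b hb)
      have := hch a l' hl' hincr
      rw [this]
      exact (hmem a List.mem_cons_self).2
    intro l l' h1 h2 h3 h4
    rw [key l h1 h3, key l' h2 h4]

lemma rowbottom_family {ι : Type} [Countable ι]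
    (hnp : Nonprincipal U) (hc : KappaComplete U) (hnorm : NormalUF U)
    (n : ι → ℕ) (F : ι → List O → ℕ) : ∃ H ∈ U, ∀ i, Homog (F i) (n i) H := by
  have h1 : ∀ i : ι, ∃ H ∈ U, Homog (F i) (n i) H := fun i =>
    rowbottom U hnp hc hnorm (n i) (F i)
  choose Hf hHf hhom using h1
  refine ⟨⋂ i, Hf i, iInter_mem_ctble U hc _ hHf, fun i => ?_⟩
  exact (hhom i).mono (Set.iInter_subset Hf i)

end Rowbottom

section Rank
variable {O : Type u} [LinearOrder O] [WellFoundedLT O]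

lemma exists_relEmbedding_into (r : ℕ → ℕ → Prop) [IsWellOrder ℕ r] {H : Set O}
    (hH : Cardinal.aleph0 < Cardinal.mk H) :
    Nonempty (r ↪r ((· < ·) : ↥H → ↥H → Prop)) := by
  refine ⟨((Ordinal.lift_type_le.{0, u, u}).1 ?_).some.toRelEmbedding⟩
  rw [Ordinal.lift_id]
  apply le_of_lt
  have hc : (Ordinal.lift.{u} (Ordinal.type r)).card < Cardinal.mk ↥H := by
    rw [← Ordinal.lift_card, Ordinal.card_type, Cardinal.mk_nat, Cardinal.lift_aleph0]
    exact hH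
  have h2 : Ordinal.lift.{u} (Ordinal.type r) < (Cardinal.mk ↥H).ord := Cardinal.lt_ord.2 hc
  have h3 : (Cardinal.mk ↥H).ord ≤ Ordinal.type ((· < ·) : ↥H → ↥H → Prop) :=
    Cardinal.ord_le.2 (by rw [Ordinal.card_type])
  exact lt_of_lt_of_le h2 h3

end Rank

/-- The rank of `j` in the order `R t` restricted to `{0, …, k}`. -/
noncomputable def rnk (R : List ℕ → ℕ → ℕ → Prop) (t : List ℕ) (k j : ℕ) : ℕ :=
  {j' | j' ≤ k ∧ R t j' j}.ncard

section RnkLemmas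
variable {A : Set (ℕ → ℕ)} {R : List ℕ → ℕ → ℕ → Prop} (hR : OrderRep A R)

lemma rnk_finite (t : List ℕ) (k j : ℕ) : {j' | j' ≤ k ∧ R t j' j}.Finite :=
  (Set.finite_Iic k).subset (fun _ h => h.1)

include hR

lemma rnk_lt {t : List ℕ} {k j j' : ℕ} (hj : j ≤ k) (h : R t j j') :
    rnk R t k j < rnk R t k j' := by
  apply Set.ncard_lt_ncard _ (rnk_finite t k j')
  rw [Set.ssubset_iff_of_subset]
  · exact ⟨j, ⟨hj, h⟩, fun hmem => hR.irrefl t j hmem.2⟩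
  · exact fun a ha => ⟨ha.1, hR.trans t a j j' ha.2 h⟩

lemma rnk_le {t : List ℕ} {k j : ℕ} (hj : j ≤ k) : rnk R t k j ≤ k := by
  have h1 : {j' | j' ≤ k ∧ R t j' j} ⊂ Set.Iic k := by
    rw [Set.ssubset_iff_of_subset (fun a ha => ha.1)]
    exact ⟨j, hj, fun hmem => hR.irrefl t j hmem.2⟩
  have h2 := Set.ncard_lt_ncard h1 (Set.finite_Iic k)
  have h3 : (Set.Iic k).ncard = k + 1 := by
    rw [← Finset.coe_Iic, Set.ncard_coe_finset, Nat.card_Iic]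
  rw [rnk]; omega

lemma rnk_iff {t : List ℕ} {k j j' : ℕ} (hk : k ≤ t.length) (hj : j ≤ k) (hj' : j' ≤ k) :
    R t j j' ↔ rnk R t k j < rnk R t k j' := by
  constructor
  · exact rnk_lt hR hj
  · intro hlt
    rcases eq_or_ne j j' with rfl | hne
    · omega
    · rcases hR.total t j j' (le_trans hj hk) (le_trans hj' hk) hne with h | h
      · exact h
      · exact absurd (rnk_lt hR hj' h) (by omega)

end RnkLemmas

lemma hist_length {X : Type*} (x : ℕ → X) (n : ℕ) : (hist x n).length = n := by
  simp [hist]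

lemma hist_prefix {X : Type*} (x : ℕ → X) {m n : ℕ} (h : m ≤ n) :
    hist x m <+: hist x n := by
  rw [List.prefix_iff_eq_take]
  apply List.ext_getElem
  · simp [hist, h]
  · intro i h1 h2
    simp [hist]

/-- Let `κ` be an uncountable cardinal (formalized as an uncountable well-ordered set
`O`) carrying a normal `κ`-complete nonprincipal ultrafilter `U`. If player II has a
winning strategy in the auxiliary game associated to an order representation of
`A ⊆ ℕ^ℕ`, then player II has a winning strategy in the Gale–Stewart game on ℕ with
payoff `A`. -/
theorem winningII_of_auxWinningII {O : Type u} [LinearOrder O] [WellFoundedLT O]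
    [Uncountable O] (U : Ultrafilter O)
    (hU_complete : KappaComplete U) (hU_nonpr : Nonprincipal U) (hU_normal : NormalUF U)
    (A : Set (ℕ → ℕ)) (R : List ℕ → ℕ → ℕ → Prop) (hR : OrderRep A R)
    (τ : List ℕ × List O → ℕ) (hτ : AuxWinningII A R τ) :
    ∃ τ' : List ℕ → ℕ, WinningII A τ' := by
  classical
  have hne : Nonempty O := inferInstance
  let d : O := Classical.choice hne
  let Ft : List ℕ → List O → ℕ := fun t l =>
    τ (t, List.ofFn (fun j : Fin (t.length / 2 + 1) => l.getD (rnk R t (t.length / 2) j) d))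
  have hFtval : ∀ (t : List ℕ) (l : List O), Ft t l =
      τ (t, List.ofFn (fun j : Fin (t.length / 2 + 1) =>
        l.getD (rnk R t (t.length / 2) j) d)) := fun _ _ => rfl
  obtain ⟨H, hHU, hhom⟩ := rowbottom_family U hU_nonpr hU_complete hU_normal
    (fun t => t.length / 2 + 1) Ft
  have hHbig := aleph0_lt_of_mem U hU_nonpr hU_complete hHU
  have hHinf := infinite_of_mem U hU_nonpr hU_complete hHU
  choose pick hpicklen hpickincr using fun n => exists_incrFrom hHinf n
  refine ⟨fun t => Ft t (pick (t.length / 2 + 1)), ?_⟩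
  intro x hcons hxA
  -- the union order `<ₓ` on ℕ
  set r : ℕ → ℕ → Prop := fun i j => ∃ m, R (hist x m) i j with hrdef
  have hmono2 : ∀ {m m' : ℕ} (i j : ℕ), m ≤ m' → R (hist x m) i j → R (hist x m') i j :=
    fun i j h hij => hR.mono _ _ (hist_prefix x h) i j hij
  have hrlev : ∀ m i j, i ≤ m → j ≤ m → (R (hist x m) i j ↔ r i j) := by
    intro m i j hi hj
    constructor
    · exact fun h => ⟨m, h⟩
    · rintro ⟨m₀, h₀⟩
      have hne' : i ≠ j := by rintro rfl; exact hR.irrefl _ _ h₀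
      rcases hR.total (hist x m) i j (by rw [hist_length]; exact hi)
        (by rw [hist_length]; exact hj) hne' with h | h
      · exact h
      · exfalso
        have h1 := hmono2 i j (le_max_right m m₀) h₀
        have h2 := hmono2 j i (le_max_left m m₀) h
        exact hR.irrefl _ i (hR.trans _ i j i h1 h2)
  have htrans : ∀ i j k', r i j → r j k' → r i k' := by
    rintro i j k' ⟨m1, h1⟩ ⟨m2, h2⟩
    exact ⟨max m1 m2, hR.trans _ i j k' (hmono2 i j (le_max_left _ _) h1)
      (hmono2 j k' (le_max_right _ _) h2)⟩
  have hirr : ∀ i, ¬ r i i := by rintro i ⟨m, h⟩; exact hR.irrefl _ i h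
  have htri : ∀ i j, i ≠ j → r i j ∨ r j i := by
    intro i j hne'
    rcases hR.total (hist x (max i j)) i j (by rw [hist_length]; exact le_max_left _ _)
      (by rw [hist_length]; exact le_max_right _ _) hne' with h | h
    · exact Or.inl ⟨_, h⟩
    · exact Or.inr ⟨_, h⟩
  haveI : IsTrans ℕ r := ⟨htrans⟩
  haveI : IsIrrefl ℕ r := ⟨hirr⟩
  haveI : IsStrictOrder ℕ r := {}
  have hwf : WellFounded r := by
    rw [RelEmbedding.wellFounded_iff_isEmpty]
    refine ⟨fun f => ?_⟩
    exact (hR.mem_iff x).1 hxA ⟨f, fun n => f.map_rel_iff.2 (Nat.lt_succ_self n)⟩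
  haveI : IsWellOrder ℕ r :=
    { trichotomous := fun i j h1 h2 => by
        by_contra h
        rcases htri i j h with h' | h'
        · exact h1 h'
        · exact h2 h'
      wf := hwf }
  obtain ⟨e⟩ := exists_relEmbedding_into r hHbig
  set ξ : ℕ → O := fun i => (e i : O) with hξdef
  have hξmem : ∀ i, ξ i ∈ H := fun i => (e i).2
  have hξiff : ∀ i j, r i j ↔ ξ i < ξ j := by
    intro i j
    rw [← e.map_rel_iff]
    exact Iff.symm Subtype.coe_lt_coe
  have hpay : AuxPayoff A R x ξ := by
    refine ⟨hxA, fun k i j hi hj => ?_⟩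
    have hk2 : k / 2 ≤ k := Nat.div_le_self k 2
    rw [hrlev k i j (by omega) (by omega)]
    exact hξiff i j
  have hconsτ : ∀ i, x (2 * i + 1) = τ (hist x (2 * i + 1), hist ξ (i + 1)) := by
    intro i
    have h1 := hcons i
    set t := hist x (2 * i + 1) with ht
    have hlt : t.length = 2 * i + 1 := by rw [ht]; exact hist_length x _
    have hd2 : t.length / 2 = i := by omega
    have hil : i ≤ t.length := by omega
    have hrnkle : ∀ j : ℕ, j ≤ i → rnk R t i j ≤ i := fun j hj => rnk_le hR hj
    let ρ : Fin (i + 1) → Fin (i + 1) := fun j =>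
      ⟨rnk R t i j, Nat.lt_succ_of_le (hrnkle j (Nat.lt_succ_iff.1 j.isLt))⟩
    have hρinj : Function.Injective ρ := by
      intro a b hab
      have hab' : rnk R t i (a : ℕ) = rnk R t i (b : ℕ) := congrArg Fin.val hab
      by_contra hne'
      have hne'' : (a : ℕ) ≠ (b : ℕ) := fun h => hne' (Fin.ext h)
      rcases hR.total t a b (le_trans (Nat.lt_succ_iff.1 a.isLt) hil)
        (le_trans (Nat.lt_succ_iff.1 b.isLt) hil) hne'' with h | h
      · have := rnk_lt hR (Nat.lt_succ_iff.1 a.isLt) h; omega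
      · have := rnk_lt hR (Nat.lt_succ_iff.1 b.isLt) h; omega
    let σe := Equiv.ofBijective ρ (Finite.injective_iff_bijective.1 hρinj)
    have hσρ : ∀ a, σe a = ρ a := fun a => rfl
    let l : List O := List.ofFn (fun m : Fin (i + 1) => ξ (σe.symm m))
    have hl_len : l.length = i + 1 := by simp [l]
    have hσrnk : ∀ m : Fin (i + 1), rnk R t i (σe.symm m : ℕ) = (m : ℕ) := by
      intro m
      have h2 : ρ (σe.symm m) = m := by rw [← hσρ]; exact Equiv.apply_symm_apply σe m
      exact congrArg Fin.val h2
    have hincrl : IncrFrom H l := by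
      constructor
      · rw [List.Chain', List.isChain_iff_getElem]
        intro m hm
        simp only [l, List.getElem_ofFn]
        rw [← hξiff]
        rw [← hrlev (2 * i + 1) _ _
          (le_trans (Nat.lt_succ_iff.1 (Fin.isLt _)) (by omega))
          (le_trans (Nat.lt_succ_iff.1 (Fin.isLt _)) (by omega))]
        rw [← ht]
        rw [rnk_iff hR hil (Nat.lt_succ_iff.1 (Fin.isLt _)) (Nat.lt_succ_iff.1 (Fin.isLt _))]
        rw [hσrnk, hσrnk]
        simp
      · intro a ha
        rw [List.mem_ofFn] at ha
        obtain ⟨m, rfl⟩ := ha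
        exact hξmem _
    have hkey : Ft t l = τ (t, hist ξ (i + 1)) := by
      rw [hFtval]
      refine congrArg (fun L => τ (t, L)) ?_
      apply List.ext_getElem
      · simp [hist, hd2]
      · intro m hm1 hm2
        have hm : m < i + 1 := by simpa [hist] using hm2
        simp only [List.getElem_ofFn, hist]
        rw [hd2]
        rw [List.getD_eq_getElem l d (by rw [hl_len]; exact Nat.lt_succ_of_le (hrnkle m (by omega)))]
        simp only [l, List.getElem_ofFn]
        have h3 : (⟨rnk R t i m, Nat.lt_succ_of_le (hrnkle m (by omega))⟩ : Fin (i + 1)) =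
            σe ⟨m, hm⟩ := by
          rw [hσρ]
        rw [h3]  -- may need care with proof irrelevance
        rw [Equiv.symm_apply_apply]
    rw [h1, ← hkey]
    have := hhom t (pick (t.length / 2 + 1)) l (hpicklen _) (by rw [hl_len, hd2])
      (hpickincr _) hincrl
    show Ft t (pick (t.length / 2 + 1)) = Ft t l
    rw [hd2]
    rw [hd2] at this
    exact this
  exact hτ x ξ hconsτ hpay
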